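/- Let \ell > 0 and b \ne 0 be integers satisfying \ell^2 + 4b \ge 0, and define the sequence s by s_0 = 0, s_1 = 1, s_j = \ell s_{j-1} + b s_{j-2} for j \ge 2. If \gcd(\ell, b) = \gcd(\ell^2, b) = r, then for every n \ge 1, \gcd(s_{n+1}, s_n) = r^{\lfloor n/2 \rfloor}. -/

import Mathlib

def ab (ℓ ℓ₀ c : ℤ) : ℕ → ℤ × ℤ
  | 0 => (0, 1)
  | k+1 =>
    ((ab ℓ ℓ₀ c k).2 + c * (ab ℓ ℓ₀ c k).1,
      ℓ₀ * ℓ * ((ab ℓ ℓ₀ c k).2 + c * (ab ℓ ℓ₀ c k).1) + c * (ab ℓ ℓ₀ c k).2)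

/-- For integers `ℓ > 0`, `b ≠ 0` with `ℓ² + 4b ≥ 0` and `s`
defined by `s₀ = 0`, `s₁ = 1`, `sⱼ = ℓ s_{j-1} + b s_{j-2}`: if
`gcd(ℓ, b) = gcd(ℓ², b) = r`, then `gcd(s_{n+1}, sₙ) = r^⌊n/2⌋` for every `n ≥ 1`. -/
theorem stmt10 (ℓ b : ℤ) (hℓ : 0 < ℓ) (hb : b ≠ 0) (hD : 0 ≤ ℓ ^ 2 + 4 * b)
    (s : ℕ → ℤ) (hs0 : s 0 = 0) (hs1 : s 1 = 1)
    (hrec : ∀ j, 2 ≤ j → s j = ℓ * s (j - 1) + b * s (j - 2))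
    (r : ℕ) (hr : Int.gcd ℓ b = r) (hr2 : Int.gcd (ℓ ^ 2) b = r) :
    ∀ n, 1 ≤ n → Int.gcd (s (n + 1)) (s n) = r ^ (n / 2) := by
  have hrpos : 0 < r := by
    rcases Nat.eq_zero_or_pos r with h | h
    · exfalso
      rw [h] at hr
      have := Int.gcd_eq_zero_iff.mp hr
      omega
    · exact h
  have hrl : (r : ℤ) ∣ ℓ := hr ▸ Int.gcd_dvd_left ℓ b
  have hrb : (r : ℤ) ∣ b := hr ▸ Int.gcd_dvd_right ℓ b
  obtain ⟨ℓ₀, hℓ₀⟩ := hrl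
  obtain ⟨c, hc⟩ := hrb
  -- gcd(c, ℓ) = 1
  have hclg : Int.gcd c ℓ = 1 := by
    have h1 : ((r * Int.gcd c ℓ : ℕ) : ℤ) ∣ ℓ ^ 2 := by
      push_cast
      rw [sq]
      exact mul_dvd_mul ⟨ℓ₀, hℓ₀⟩ (Int.gcd_dvd_right c ℓ)
    have h2 : ((r * Int.gcd c ℓ : ℕ) : ℤ) ∣ b := by
      push_cast
      rw [hc]
      exact mul_dvd_mul_left _ (Int.gcd_dvd_left c ℓ)
    have h3 : (r * Int.gcd c ℓ) ∣ r := by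
      have := Int.dvd_gcd h1 h2
      rw [hr2] at this
      exact_mod_cast this
    have h4 : r * Int.gcd c ℓ ∣ r * 1 := by simpa using h3
    exact Nat.dvd_one.mp ((Nat.mul_dvd_mul_iff_left hrpos).mp h4)
  have hcl : IsCoprime c ℓ := Int.isCoprime_iff_gcd_eq_one.mpr hclg
  have hcl0 : IsCoprime c ℓ₀ := by
    have h := hcl
    rw [hℓ₀] at h
    exact IsCoprime.of_mul_right_right h
  set R : ℤ := (r : ℤ) with hR
  -- the key formula
  have key : ∀ k : ℕ, s (2*k+1) = R^k * (ab ℓ ℓ₀ c k).2 ∧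
      s (2*k+2) = R^k * ℓ * (ab ℓ ℓ₀ c (k+1)).1 := by
    intro k
    induction k with
    | zero =>
      constructor
      · simpa [ab] using hs1
      · have h := hrec 2 (by omega)
        norm_num at h
        rw [hs0, hs1] at h
        simp [ab, h]
    | succ k ih =>
      have e1 : s (2*(k+1)+1) = ℓ * s (2*k+2) + b * s (2*k+1) := by
        have h := hrec (2*(k+1)+1) (by omega)
        rw [show 2*(k+1)+1-1 = 2*k+2 from by omega,
            show 2*(k+1)+1-2 = 2*k+1 from by omega] at h
        exact h
      have e2 : s (2*(k+1)+2) = ℓ * s (2*(k+1)+1) + b * s (2*k+2) := by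
        have h := hrec (2*(k+1)+2) (by omega)
        rw [show 2*(k+1)+2-1 = 2*(k+1)+1 from by omega,
            show 2*(k+1)+2-2 = 2*k+2 from by omega] at h
        exact h
      have p1 : s (2*(k+1)+1) = R^(k+1) * (ab ℓ ℓ₀ c (k+1)).2 := by
        rw [e1, ih.1, ih.2, hc]
        simp only [ab]
        linear_combination
          (R^k * ((ab ℓ ℓ₀ c k).2 + c * (ab ℓ ℓ₀ c k).1) * ℓ) * hℓ₀
      refine ⟨p1, ?_⟩
      rw [e2, p1, ih.2, hc]
      simp only [ab]
      ring
  -- coprimality invariants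
  have inv : ∀ k : ℕ, IsCoprime (ab ℓ ℓ₀ c k).2 ℓ ∧ IsCoprime (ab ℓ ℓ₀ c k).2 c ∧
      IsCoprime (ab ℓ ℓ₀ c (k+1)).1 c ∧ IsCoprime (ab ℓ ℓ₀ c k).2 (ab ℓ ℓ₀ c k).1 ∧
      IsCoprime (ab ℓ ℓ₀ c k).2 (ab ℓ ℓ₀ c (k+1)).1 := by
    intro k
    induction k with
    | zero =>
      refine ⟨?_, ?_, ?_, ?_, ?_⟩
      · simpa [ab] using (isCoprime_one_left : IsCoprime (1:ℤ) ℓ)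
      · simpa [ab] using (isCoprime_one_left : IsCoprime (1:ℤ) c)
      · simpa [ab] using (isCoprime_one_left : IsCoprime (1:ℤ) c)
      · simpa [ab] using (isCoprime_one_left : IsCoprime (1:ℤ) 0)
      · simpa [ab] using (isCoprime_one_left : IsCoprime (1:ℤ) (1 + c*0))
    | succ k ih =>
      obtain ⟨hBl, hBc, hA'c, hBA, hBA'⟩ := ih
      have eA' : (ab ℓ ℓ₀ c (k+1)).1 = (ab ℓ ℓ₀ c k).2 + c * (ab ℓ ℓ₀ c k).1 := by
        simp [ab]
      have eB' : (ab ℓ ℓ₀ c (k+1)).2 =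
          ℓ₀ * ℓ * (ab ℓ ℓ₀ c (k+1)).1 + c * (ab ℓ ℓ₀ c k).2 := by
        simp [ab]
      have eA'' : (ab ℓ ℓ₀ c (k+2)).1 =
          (ab ℓ ℓ₀ c (k+1)).2 + c * (ab ℓ ℓ₀ c (k+1)).1 := by
        simp [ab]
      set A : ℤ := (ab ℓ ℓ₀ c k).1 with hA
      set B : ℤ := (ab ℓ ℓ₀ c k).2 with hB
      set A' : ℤ := (ab ℓ ℓ₀ c (k+1)).1 with hA'
      set B' : ℤ := (ab ℓ ℓ₀ c (k+1)).2 with hB'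
      have i1 : IsCoprime B' ℓ := by
        have h : IsCoprime (c * B) ℓ := hcl.mul_left hBl
        have h2 := h.add_mul_left_left (ℓ₀ * A')
        rw [show B' = c * B + ℓ * (ℓ₀ * A') from by rw [eB']; ring]
        exact h2
      have i2 : IsCoprime B' c := by
        have h : IsCoprime (ℓ₀ * ℓ * A') c :=
          (hcl0.symm.mul_left hcl.symm).mul_left hA'c
        have h2 := h.add_mul_left_left B
        rw [eB']
        exact h2
      have i4 : IsCoprime B' A' := by
        have h : IsCoprime (c * B) A' := hA'c.symm.mul_left hBA'
        have h2 := h.add_mul_right_left (ℓ₀ * ℓ)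
        rw [show B' = c * B + ℓ₀ * ℓ * A' from by rw [eB']; ring]
        exact h2
      have i3 : IsCoprime (ab ℓ ℓ₀ c (k+2)).1 c := by
        rw [eA'']
        exact i2.add_mul_left_left A'
      have i5 : IsCoprime B' (ab ℓ ℓ₀ c (k+2)).1 := by
        have h : IsCoprime B' (c * A') := i2.mul_right i4
        have h2 := h.add_mul_left_right 1
        rw [show (ab ℓ ℓ₀ c (k+2)).1 = c * A' + B' * 1 from by rw [eA'']; ring]
        exact h2
      exact ⟨i1, i2, i3, i4, i5⟩
  -- finish
  intro n hn
  obtain ⟨k, hk⟩ : ∃ k, n = 2*k+1 ∨ n = 2*k+2 := ⟨(n-1)/2, by omega⟩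
  rcases hk with hk | hk
  · subst hk
    obtain ⟨k1, k2⟩ := key k
    obtain ⟨hBl, hBc, hA'c, hBA, hBA'⟩ := inv k
    rw [show 2*k+1+1 = 2*k+2 from rfl, k1, k2,
        show R^k * ℓ * (ab ℓ ℓ₀ c (k+1)).1 = R^k * (ℓ * (ab ℓ ℓ₀ c (k+1)).1) from by ring,
        Int.gcd_mul_left]
    have hco : IsCoprime (ℓ * (ab ℓ ℓ₀ c (k+1)).1) (ab ℓ ℓ₀ c k).2 :=
      hBl.symm.mul_left hBA'.symm
    rw [Int.isCoprime_iff_gcd_eq_one.mp hco, show (2*k+1)/2 = k from by omega]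
    simp [hR, Int.natAbs_pow]
  · subst hk
    obtain ⟨k1, k2⟩ := key (k+1)
    obtain ⟨_, _, _, _, _⟩ := inv k
    obtain ⟨hBl, hBc, hA'c, hBA, hBA'⟩ := inv (k+1)
    have k2' : s (2*k+2) = R^(k+1) * (ℓ₀ * (ab ℓ ℓ₀ c (k+1)).1) := by
      rw [(key k).2, hℓ₀]
      ring
    rw [show 2*k+2+1 = 2*(k+1)+1 from by ring, k1, k2', Int.gcd_mul_left]
    have hl0 : IsCoprime (ab ℓ ℓ₀ c (k+1)).2 ℓ₀ := by
      have h : IsCoprime (ab ℓ ℓ₀ c (k+1)).2 (R * ℓ₀) := by rw [← hℓ₀]; exact hBl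
      exact IsCoprime.of_mul_right_right h
    have hco : IsCoprime ((ab ℓ ℓ₀ c (k+1)).2) (ℓ₀ * (ab ℓ ℓ₀ c (k+1)).1) :=
      hl0.mul_right hBA
    rw [Int.isCoprime_iff_gcd_eq_one.mp hco, show (2*k+2)/2 = k+1 from by omega]
    simp [hR, Int.natAbs_pow]
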